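/- Fix τ∈(0,1), λ≥0, and a location i∈[1:n]. Let θ̂^max_i := max{θ_i : θ∈S^τ} and let θ̂^max∈S^τ attain this value at location i. Let Ĵ=[a:b] be the largest discrete interval containing i such that θ̂^max_u ≤ θ̂^max_i for all u∈Ĵ. Then u^τ_{I,Ĵ} < |I| for every discrete interval I⊆Ĵ containing i. -/

import Mathlib

open scoped BigOperators

noncomputable section

namespace QTVD

/-- Quantile (check) loss `ρ_τ(x) = max{τx, (τ-1)x}`. -/
def qloss (τ x : ℝ) : ℝ := max (τ * x) ((τ - 1) * x)

/-- Total variation `TV(θ) = ∑ |θ_{i+1} - θ_i|` (coordinates indexed `0,…,n-1`). -/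
def TV {n : ℕ} (θ : Fin n → ℝ) : ℝ :=
  ∑ i : Fin n, if h : (i : ℕ) + 1 < n then |θ ⟨(i : ℕ) + 1, h⟩ - θ i| else 0

/-- Quantile TVD objective. -/
def obj {n : ℕ} (τ lam : ℝ) (y θ : Fin n → ℝ) : ℝ :=
  (∑ i : Fin n, qloss τ (y i - θ i)) + lam * TV θ

/-- Quantile TVD solution set `S^τ`. -/
def sol {n : ℕ} (τ lam : ℝ) (y : Fin n → ℝ) : Set (Fin n → ℝ) :=
  {θ | ∀ η : Fin n → ℝ, obj τ lam y θ ≤ obj τ lam y η}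

/-- `k`-th smallest entry of `y` restricted to `I` (as extended real;
`⊥` if `k ≤ 0`, `⊤` if `k ≥ |I| + 1`). -/
def orderStat {n : ℕ} (y : Fin n → ℝ) (I : Finset (Fin n)) (k : ℤ) : EReal :=
  if k ≤ 0 then ⊥
  else if (I.card : ℤ) < k then ⊤
  else (((I.val.map y).sort (· ≤ ·)).getD (k.toNat - 1) 0 : ℝ)

/-- The constant `C_{I,J}` for discrete intervals `I=[c:d] ⊆ J=[a:b] ⊆ [0:n-1]`
(0-based indexing; 1-based `[s:t] ⊆ [j1:j2] ⊆ [1:n]` corresponds to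
`c = s-1, d = t-1, a = j1-1, b = j2-1`). -/
def Cconst (n c d a b : ℕ) : ℝ :=
  if 0 < a ∧ b < n - 1 then
    if a < c ∧ d < b then 1 else if c = a ∧ d = b then -1 else 0
  else if a = 0 ∧ b < n - 1 then
    if a < c ∧ d < b then 1 else if c = a ∧ d = b then -(1/2)
      else if c = 0 ∧ d < b then 1/2 else 0
  else if 0 < a ∧ b = n - 1 then
    if a < c ∧ d < b then 1 else if c = a ∧ d = b then -(1/2)
      else if a < c ∧ d = b then 1/2 else 0
  else
    if a < c ∧ d < b then 1 else if c = a ∧ d = b then 0 else 1/2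

/-- `u^τ_{I,J} = τ|I| - 2λ C_{I,J}` for `I=[c:d] ⊆ J=[a:b]`. -/
def uIJ (τ lam : ℝ) (n c d a b : ℕ) : ℝ :=
  τ * ((d : ℝ) - (c : ℝ) + 1) - 2 * lam * Cconst n c d a b

/-- `l^τ_{I,J} = τ|I| + 2λ C_{I,J}` for `I=[c:d] ⊆ J=[a:b]`. -/
def lIJ (τ lam : ℝ) (n c d a b : ℕ) : ℝ :=
  τ * ((d : ℝ) - (c : ℝ) + 1) + 2 * lam * Cconst n c d a b

/-- Upper envelope `U^τ_i`: min over intervals `J ∋ i` of the max over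
subintervals `I ⊆ J` with `i ∈ I` of `y_{I,(⌊u^τ_{I,J}⌋+1)}`. -/
def Uenv {n : ℕ} (τ lam : ℝ) (y : Fin n → ℝ) (i : Fin n) : EReal :=
  ⨅ (a : Fin n) (b : Fin n) (_ : a ≤ i) (_ : i ≤ b),
    ⨆ (c : Fin n) (d : Fin n) (_ : a ≤ c) (_ : c ≤ i) (_ : i ≤ d) (_ : d ≤ b),
      orderStat y (Finset.Icc c d) (⌊uIJ τ lam n (c : ℕ) (d : ℕ) (a : ℕ) (b : ℕ)⌋ + 1)

/-- Lower envelope `L^τ_i`: max over intervals `J ∋ i` of the min over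
subintervals `I ⊆ J` with `i ∈ I` of `y_{I,(⌈l^τ_{I,J}⌉)}`. -/
def Lenv {n : ℕ} (τ lam : ℝ) (y : Fin n → ℝ) (i : Fin n) : EReal :=
  ⨆ (a : Fin n) (b : Fin n) (_ : a ≤ i) (_ : i ≤ b),
    ⨅ (c : Fin n) (d : Fin n) (_ : a ≤ c) (_ : c ≤ i) (_ : i ≤ d) (_ : d ≤ b),
      orderStat y (Finset.Icc c d) ⌈lIJ τ lam n (c : ℕ) (d : ℕ) (a : ℕ) (b : ℕ)⌉

/-- Admissible dual (KKT) variables `(g, z)` for a candidate solution `θ`.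
`z` is indexed by `Fin (n+1)` (so `z 0,…,z n` with `z 0 = z n = 0`); the
edge between coordinates `j` and `j+1` (0-based) corresponds to `z (j+1)`. -/
def IsDual {n : ℕ} (τ lam : ℝ) (y θ : Fin n → ℝ) (g : Fin n → ℝ)
    (z : Fin (n + 1) → ℝ) : Prop :=
  z 0 = 0 ∧ z (Fin.last n) = 0 ∧
  (∀ j : Fin n, ∀ h : (j : ℕ) + 1 < n,
    (θ ⟨(j : ℕ) + 1, h⟩ < θ j → z j.succ = lam) ∧
    (θ j = θ ⟨(j : ℕ) + 1, h⟩ → -lam ≤ z j.succ ∧ z j.succ ≤ lam) ∧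
    (θ j < θ ⟨(j : ℕ) + 1, h⟩ → z j.succ = -lam)) ∧
  (∀ j : Fin n,
    (θ j < y j → g j = -τ) ∧
    (θ j = y j → -τ ≤ g j ∧ g j ≤ 1 - τ) ∧
    (y j < θ j → g j = 1 - τ)) ∧
  (∀ a b : Fin n, a ≤ b → (∑ j ∈ Finset.Icc a b, g j) = z a.castSucc - z b.succ)

/-- `sign_+(x) = 1` if `x ≥ 0`, `-1` if `x < 0`. -/
def signP (x : ℝ) : ℝ := if 0 ≤ x then 1 else -1

/-- `sign_-(x) = 1` if `x > 0`, `-1` if `x ≤ 0`. -/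
def signM (x : ℝ) : ℝ := if 0 < x then 1 else -1

/-- Submodularity with respect to the coordinatewise lattice structure on `ℝ^n`. -/
def Submodular {n : ℕ} (P : (Fin n → ℝ) → ℝ) : Prop :=
  ∀ x y : Fin n → ℝ, P (x ⊔ y) + P (x ⊓ y) ≤ P x + P y

/-- Penalized quantile regression objective with a general penalty `P`. -/
def Gobj {n : ℕ} (τ lam : ℝ) (y : Fin n → ℝ) (P : (Fin n → ℝ) → ℝ)
    (θ : Fin n → ℝ) : ℝ :=
  (∑ j : Fin n, qloss τ (y j - θ j)) + lam * P θ

end QTVD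

section Aux
open QTVD

lemma qloss_of_nonneg (τ : ℝ) {x : ℝ} (hx : 0 ≤ x) : qloss τ x = τ * x :=
  max_eq_left (by nlinarith)

lemma qloss_of_nonpos (τ : ℝ) {x : ℝ} (hx : x ≤ 0) : qloss τ x = (τ - 1) * x :=
  max_eq_right (by nlinarith)

lemma qloss_sub_le (τ : ℝ) {x ε : ℝ} (hε : 0 ≤ ε) :
    qloss τ (x - ε) ≤ qloss τ x + (1 - τ) * ε := by
  apply max_le
  · have h1 : τ * (x - ε) ≤ τ * x + (1 - τ) * ε := by nlinarith
    exact h1.trans (add_le_add_left (le_max_left _ _) _)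
  · have h1 : (τ - 1) * (x - ε) = (τ - 1) * x + (1 - τ) * ε := by ring
    rw [h1]
    exact add_le_add_left (le_max_right _ _) _

lemma TV_perturb {n : ℕ} (ε : ℝ) (θ : Fin n → ℝ) (a b : Fin n) (hab : a ≤ b)
    (hε : 0 < ε)
    (hL : ∀ _ : 0 < (a : ℕ),
      θ a + ε < θ ⟨(a : ℕ) - 1, lt_of_le_of_lt (Nat.sub_le _ _) a.isLt⟩)
    (hR : ∀ h : (b : ℕ) + 1 < n, θ b + ε < θ ⟨(b : ℕ) + 1, h⟩) :
    TV (fun u => θ u + if u ∈ Finset.Icc a b then ε else 0)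
      = TV θ - ((if 0 < (a : ℕ) then ε else 0) + (if (b : ℕ) + 1 < n then ε else 0)) := by
  have hab' : (a : ℕ) ≤ (b : ℕ) := hab
  set η : Fin n → ℝ := fun u => θ u + if u ∈ Finset.Icc a b then ε else 0 with hη
  have ηdef : ∀ u, η u = θ u + if u ∈ Finset.Icc a b then ε else 0 := fun u => rfl
  have key : ∀ j : Fin n,
      (if h : (j : ℕ) + 1 < n then |η ⟨(j : ℕ) + 1, h⟩ - η j| else 0)
        - (if h : (j : ℕ) + 1 < n then |θ ⟨(j : ℕ) + 1, h⟩ - θ j| else 0)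
      = (if (j : ℕ) + 1 = (a : ℕ) then -ε else 0)
        + (if ((j : ℕ) = (b : ℕ) ∧ (b : ℕ) + 1 < n) then -ε else 0) := by
    intro j
    by_cases hn : (j : ℕ) + 1 < n
    · rw [dif_pos hn, dif_pos hn]
      have hmemj : (j ∈ Finset.Icc a b) ↔ ((a : ℕ) ≤ (j : ℕ) ∧ (j : ℕ) ≤ (b : ℕ)) :=
        (Finset.mem_Icc).trans (and_congr Fin.le_def Fin.le_def)
      have hmemj1 : ((⟨(j : ℕ) + 1, hn⟩ : Fin n) ∈ Finset.Icc a b)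
          ↔ ((a : ℕ) ≤ (j : ℕ) + 1 ∧ (j : ℕ) + 1 ≤ (b : ℕ)) :=
        (Finset.mem_Icc).trans (and_congr Fin.le_def Fin.le_def)
      by_cases h1 : (j : ℕ) + 1 = (a : ℕ)
      · have hja : j ∉ Finset.Icc a b := by rw [hmemj]; omega
        have hj1a : (⟨(j : ℕ) + 1, hn⟩ : Fin n) ∈ Finset.Icc a b := by rw [hmemj1]; omega
        have hj1 : (⟨(j : ℕ) + 1, hn⟩ : Fin n) = a := Fin.ext h1
        have hjm : j = (⟨(a : ℕ) - 1, lt_of_le_of_lt (Nat.sub_le _ _) a.isLt⟩ : Fin n) :=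
          Fin.ext (show (j : ℕ) = (a : ℕ) - 1 by omega)
        have hgap := hL (by omega)
        rw [if_pos h1, if_neg (show ¬ ((j : ℕ) = (b : ℕ) ∧ (b : ℕ) + 1 < n) by omega)]
        rw [ηdef, ηdef, if_pos hj1a, if_neg hja, hj1, hjm]
        rw [abs_of_neg (by linarith), abs_of_neg (by linarith)]
        ring
      · by_cases h2 : (j : ℕ) = (b : ℕ)
        · have hbn : (b : ℕ) + 1 < n := by omega
          have hja : j ∈ Finset.Icc a b := by rw [hmemj]; omega
          have hj1a : (⟨(j : ℕ) + 1, hn⟩ : Fin n) ∉ Finset.Icc a b := by rw [hmemj1]; omega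
          have hj1 : (⟨(j : ℕ) + 1, hn⟩ : Fin n) = (⟨(b : ℕ) + 1, hbn⟩ : Fin n) :=
            Fin.ext (show (j : ℕ) + 1 = (b : ℕ) + 1 by omega)
          have hjb : j = b := Fin.ext h2
          have hgap := hR hbn
          rw [if_neg (show ¬ ((j : ℕ) + 1 = (a : ℕ)) by omega), if_pos ⟨h2, hbn⟩]
          rw [ηdef, ηdef, if_neg hj1a, if_pos hja, hj1, hjb]
          rw [abs_of_pos (by linarith), abs_of_pos (by linarith)]
          ring
        · rw [if_neg h1, if_neg (by tauto)]
          by_cases hin : (a : ℕ) ≤ (j : ℕ) ∧ (j : ℕ) ≤ (b : ℕ)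
          · have hja : j ∈ Finset.Icc a b := hmemj.mpr hin
            have hj1a : (⟨(j : ℕ) + 1, hn⟩ : Fin n) ∈ Finset.Icc a b := by rw [hmemj1]; omega
            rw [ηdef, ηdef, if_pos hj1a, if_pos hja]
            have heq : θ ⟨(j : ℕ) + 1, hn⟩ + ε - (θ j + ε) = θ ⟨(j : ℕ) + 1, hn⟩ - θ j := by
              ring
            rw [heq]; ring
          · have hja : j ∉ Finset.Icc a b := by rw [hmemj]; omega
            have hj1a : (⟨(j : ℕ) + 1, hn⟩ : Fin n) ∉ Finset.Icc a b := by rw [hmemj1]; omega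
            rw [ηdef, ηdef, if_neg hj1a, if_neg hja]
            have heq : θ ⟨(j : ℕ) + 1, hn⟩ + 0 - (θ j + 0) = θ ⟨(j : ℕ) + 1, hn⟩ - θ j := by
              ring
            rw [heq]; ring
    · rw [dif_neg hn, dif_neg hn]
      have h1 : ¬ ((j : ℕ) + 1 = (a : ℕ)) := by have := a.isLt; omega
      have h2 : ¬ ((j : ℕ) = (b : ℕ) ∧ (b : ℕ) + 1 < n) := by omega
      rw [if_neg h1, if_neg h2]; ring
  have hdiff : TV η - TV θ
      = ∑ j : Fin n, ((if (j : ℕ) + 1 = (a : ℕ) then -ε else 0)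
          + (if ((j : ℕ) = (b : ℕ) ∧ (b : ℕ) + 1 < n) then -ε else 0)) := by
    rw [TV, TV, ← Finset.sum_sub_distrib]
    exact Finset.sum_congr rfl fun j _ => key j
  have hsum1 : (∑ j : Fin n, (if (j : ℕ) + 1 = (a : ℕ) then (-ε : ℝ) else 0))
      = (if 0 < (a : ℕ) then -ε else 0) := by
    by_cases ha : 0 < (a : ℕ)
    · rw [if_pos ha]
      set p : Fin n := ⟨(a : ℕ) - 1, lt_of_le_of_lt (Nat.sub_le _ _) a.isLt⟩ with hp
      have hpv : (p : ℕ) = (a : ℕ) - 1 := rfl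
      have hc : ∀ j : Fin n, ((j : ℕ) + 1 = (a : ℕ)) ↔ j = p := by
        intro j
        rw [Fin.ext_iff, hpv]
        omega
      calc (∑ j : Fin n, (if (j : ℕ) + 1 = (a : ℕ) then (-ε : ℝ) else 0))
          = ∑ j : Fin n, (if j = p then (-ε : ℝ) else 0) := by
            refine Finset.sum_congr rfl fun j _ => ?_
            by_cases h : (j : ℕ) + 1 = (a : ℕ)
            · rw [if_pos h, if_pos ((hc j).mp h)]
            · rw [if_neg h, if_neg (fun hc' => h ((hc j).mpr hc'))]
        _ = -ε := by rw [Finset.sum_ite_eq' Finset.univ p (fun _ => -ε),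
              if_pos (Finset.mem_univ p)]
    · rw [if_neg ha]
      exact Finset.sum_eq_zero fun j _ => if_neg (by omega)
  have hsum2 : (∑ j : Fin n, (if ((j : ℕ) = (b : ℕ) ∧ (b : ℕ) + 1 < n) then (-ε : ℝ) else 0))
      = (if (b : ℕ) + 1 < n then -ε else 0) := by
    by_cases hb : (b : ℕ) + 1 < n
    · rw [if_pos hb]
      calc (∑ j : Fin n, (if ((j : ℕ) = (b : ℕ) ∧ (b : ℕ) + 1 < n) then (-ε : ℝ) else 0))
          = ∑ j : Fin n, (if j = b then (-ε : ℝ) else 0) := by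
            refine Finset.sum_congr rfl fun j _ => ?_
            by_cases h : (j : ℕ) = (b : ℕ)
            · rw [if_pos ⟨h, hb⟩, if_pos (Fin.ext h)]
            · rw [if_neg (by tauto), if_neg (fun hc' => h (by rw [hc']))]
        _ = -ε := by rw [Finset.sum_ite_eq' Finset.univ b (fun _ => -ε),
              if_pos (Finset.mem_univ b)]
    · rw [if_neg hb]
      exact Finset.sum_eq_zero fun j _ => if_neg (by tauto)
  rw [Finset.sum_add_distrib, hsum1, hsum2] at hdiff
  split_ifs at hdiff ⊢ <;> linarith

lemma obj_perturb {n : ℕ} (τ lam ε : ℝ) (y θ : Fin n → ℝ)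
    (a b : Fin n) (hab : a ≤ b) (hε : 0 < ε)
    (hL : ∀ _ : 0 < (a : ℕ),
      θ a + ε < θ ⟨(a : ℕ) - 1, lt_of_le_of_lt (Nat.sub_le _ _) a.isLt⟩)
    (hR : ∀ h : (b : ℕ) + 1 < n, θ b + ε < θ ⟨(b : ℕ) + 1, h⟩) :
    obj τ lam y (fun u => θ u + if u ∈ Finset.Icc a b then ε else 0)
      = obj τ lam y θ
        + (∑ u ∈ Finset.Icc a b,
            (qloss τ (y u - θ u - ε) - qloss τ (y u - θ u)))
        - lam * ((if 0 < (a : ℕ) then ε else 0) + (if (b : ℕ) + 1 < n then ε else 0)) := by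
  have hTV := TV_perturb ε θ a b hab hε hL hR
  have hloss : (∑ u : Fin n, qloss τ (y u - (θ u + if u ∈ Finset.Icc a b then ε else 0)))
      = (∑ u : Fin n, qloss τ (y u - θ u))
        + ∑ u ∈ Finset.Icc a b, (qloss τ (y u - θ u - ε) - qloss τ (y u - θ u)) := by
    have h1 : ∀ u : Fin n,
        qloss τ (y u - (θ u + if u ∈ Finset.Icc a b then ε else 0))
          = qloss τ (y u - θ u)
            + (if u ∈ Finset.Icc a b
                then qloss τ (y u - θ u - ε) - qloss τ (y u - θ u) else 0) := by
      intro u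
      by_cases hu : u ∈ Finset.Icc a b
      · rw [if_pos hu, if_pos hu]
        have h2 : y u - (θ u + ε) = y u - θ u - ε := by ring
        rw [h2]; ring
      · rw [if_neg hu, if_neg hu]
        rw [add_zero, add_zero]
    rw [Finset.sum_congr rfl fun u _ => h1 u, Finset.sum_add_distrib]
    congr 1
    rw [Finset.sum_ite_mem, Finset.univ_inter]
  simp only [obj]
  rw [hloss, hTV]
  ring

lemma key_strict {n : ℕ} (τ lam : ℝ) (hτ1 : τ < 1) (hlam : 0 ≤ lam)
    (y : Fin n → ℝ) (i : Fin n) (θ : Fin n → ℝ)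
    (hθ : θ ∈ sol τ lam y)
    (hattain : ∀ θ' ∈ sol τ lam y, θ' i ≤ θ i)
    (a b : Fin n) (hai : a ≤ i) (hib : i ≤ b)
    (hJle : ∀ u ∈ Finset.Icc a b, θ u ≤ θ i)
    (hmaxl : ∀ _h : 0 < (a : ℕ),
      θ i < θ ⟨(a : ℕ) - 1, lt_of_le_of_lt (Nat.sub_le _ _) a.isLt⟩)
    (hmaxr : ∀ h : (b : ℕ) + 1 < n, θ i < θ ⟨(b : ℕ) + 1, h⟩) :
    2 * lam * ((if 0 < (a : ℕ) then (1/2 : ℝ) else 0)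
        + (if (b : ℕ) + 1 < n then (1/2 : ℝ) else 0))
      < (1 - τ) * ((b : ℝ) - (a : ℝ) + 1) := by
  have hab : a ≤ b := hai.trans hib
  have hab' : (a : ℕ) ≤ (b : ℕ) := hab
  set K : ℝ := (if 0 < (a : ℕ) then (1/2 : ℝ) else 0)
      + (if (b : ℕ) + 1 < n then (1/2 : ℝ) else 0) with hK
  set eL : ℝ := if h : 0 < (a : ℕ) then
      θ ⟨(a : ℕ) - 1, lt_of_le_of_lt (Nat.sub_le _ _) a.isLt⟩ - θ i else 1 with heL
  set eR : ℝ := if h : (b : ℕ) + 1 < n then θ ⟨(b : ℕ) + 1, h⟩ - θ i else 1 with heR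
  have heL0 : 0 < eL := by
    rw [heL]; split_ifs with h
    · linarith [hmaxl h]
    · norm_num
  have heR0 : 0 < eR := by
    rw [heR]; split_ifs with h
    · linarith [hmaxr h]
    · norm_num
  have hcard : ((Finset.Icc a b).card : ℝ) = (b : ℝ) - (a : ℝ) + 1 := by
    rw [Fin.card_Icc, Nat.cast_sub (by omega)]
    push_cast; ring
  have hia : θ a ≤ θ i := hJle a (Finset.mem_Icc.mpr ⟨le_refl a, hab⟩)
  have hib' : θ b ≤ θ i := hJle b (Finset.mem_Icc.mpr ⟨hab, le_refl b⟩)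
  have main : ∀ ε : ℝ, 0 < ε → ε < eL → ε < eR →
      obj τ lam y (fun u => θ u + if u ∈ Finset.Icc a b then ε else 0)
        = obj τ lam y θ
          + (∑ u ∈ Finset.Icc a b,
              (qloss τ (y u - θ u - ε) - qloss τ (y u - θ u)))
          - lam * (2 * K * ε) := by
    intro ε hε hεL hεR
    have hL : ∀ _ : 0 < (a : ℕ),
        θ a + ε < θ ⟨(a : ℕ) - 1, lt_of_le_of_lt (Nat.sub_le _ _) a.isLt⟩ := by
      intro h
      have h2 : eL = θ ⟨(a : ℕ) - 1, lt_of_le_of_lt (Nat.sub_le _ _) a.isLt⟩ - θ i := by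
        rw [heL, dif_pos h]
      linarith
    have hR : ∀ h : (b : ℕ) + 1 < n, θ b + ε < θ ⟨(b : ℕ) + 1, h⟩ := by
      intro h
      have h2 : eR = θ ⟨(b : ℕ) + 1, h⟩ - θ i := by rw [heR, dif_pos h]
      linarith
    have hσ : ((if 0 < (a : ℕ) then ε else 0) + (if (b : ℕ) + 1 < n then ε else 0))
        = 2 * K * ε := by
      rw [hK]; split_ifs <;> ring
    rw [obj_perturb τ lam ε y θ a b hab hε hL hR, hσ]
  by_cases hex : ∃ u ∈ Finset.Icc a b, θ u < y u
  · obtain ⟨u₀, hu₀, hu₀'⟩ := hex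
    have hg0 : 0 < y u₀ - θ u₀ := by linarith
    set ε : ℝ := min (min eL eR) (y u₀ - θ u₀) / 2 with hεdef
    have hmin : 0 < min (min eL eR) (y u₀ - θ u₀) := lt_min (lt_min heL0 heR0) hg0
    have hε0 : 0 < ε := by rw [hεdef]; linarith
    have hεL : ε < eL := by
      have h2 : min (min eL eR) (y u₀ - θ u₀) ≤ eL :=
        le_trans (min_le_left _ _) (min_le_left _ _)
      rw [hεdef]; linarith
    have hεR : ε < eR := by
      have h2 : min (min eL eR) (y u₀ - θ u₀) ≤ eR :=
        le_trans (min_le_left _ _) (min_le_right _ _)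
      rw [hεdef]; linarith
    have hεg : ε < y u₀ - θ u₀ := by
      have h2 : min (min eL eR) (y u₀ - θ u₀) ≤ y u₀ - θ u₀ := min_le_right _ _
      rw [hεdef]; linarith
    have hopt := hθ (fun u => θ u + if u ∈ Finset.Icc a b then ε else 0)
    rw [main ε hε0 hεL hεR] at hopt
    have hmain : 0 ≤ (∑ u ∈ Finset.Icc a b,
        (qloss τ (y u - θ u - ε) - qloss τ (y u - θ u))) - lam * (2 * K * ε) := by
      linarith
    have hdiff0 : qloss τ (y u₀ - θ u₀ - ε) - qloss τ (y u₀ - θ u₀) = -(τ * ε) := by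
      rw [qloss_of_nonneg τ (by linarith : (0:ℝ) ≤ y u₀ - θ u₀ - ε),
        qloss_of_nonneg τ (by linarith : (0:ℝ) ≤ y u₀ - θ u₀)]
      ring
    have hrest : ∑ u ∈ (Finset.Icc a b).erase u₀,
        (qloss τ (y u - θ u - ε) - qloss τ (y u - θ u))
        ≤ ((Finset.Icc a b).erase u₀).card • ((1 - τ) * ε) := by
      apply Finset.sum_le_card_nsmul
      intro x _
      have := qloss_sub_le τ (le_of_lt hε0) (x := y x - θ x)
      linarith
    rw [nsmul_eq_mul] at hrest
    have hcarde : (((Finset.Icc a b).erase u₀).card : ℝ) = ((b : ℝ) - (a : ℝ) + 1) - 1 := by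
      rw [Finset.card_erase_of_mem hu₀]
      have h1 : 1 ≤ (Finset.Icc a b).card := Finset.card_pos.mpr ⟨u₀, hu₀⟩
      rw [Nat.cast_sub h1, hcard]
      norm_num
    rw [hcarde] at hrest
    have hsplit := Finset.add_sum_erase (Finset.Icc a b)
      (fun u => qloss τ (y u - θ u - ε) - qloss τ (y u - θ u)) hu₀
    have hS : (∑ u ∈ Finset.Icc a b, (qloss τ (y u - θ u - ε) - qloss τ (y u - θ u)))
        ≤ -(τ * ε) + (((b : ℝ) - (a : ℝ) + 1) - 1) * ((1 - τ) * ε) := by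
      rw [← hsplit]
      simp only [hdiff0]
      linarith
    have h2 : 2 * lam * K * ε ≤ ((1 - τ) * ((b : ℝ) - (a : ℝ) + 1) - 1) * ε := by
      nlinarith
    have h3 : 2 * lam * K ≤ (1 - τ) * ((b : ℝ) - (a : ℝ) + 1) - 1 :=
      le_of_mul_le_mul_right (by linarith) hε0
    linarith
  · push_neg at hex
    set ε : ℝ := min eL eR / 2 with hεdef
    have hmin : 0 < min eL eR := lt_min heL0 heR0
    have hε0 : 0 < ε := by rw [hεdef]; linarith
    have hεL : ε < eL := by
      have h2 : min eL eR ≤ eL := min_le_left _ _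
      rw [hεdef]; linarith
    have hεR : ε < eR := by
      have h2 : min eL eR ≤ eR := min_le_right _ _
      rw [hεdef]; linarith
    have hm := main ε hε0 hεL hεR
    have hS : (∑ u ∈ Finset.Icc a b, (qloss τ (y u - θ u - ε) - qloss τ (y u - θ u)))
        = ((b : ℝ) - (a : ℝ) + 1) * ((1 - τ) * ε) := by
      calc (∑ u ∈ Finset.Icc a b, (qloss τ (y u - θ u - ε) - qloss τ (y u - θ u)))
          = ∑ _u ∈ Finset.Icc a b, (1 - τ) * ε := by
            refine Finset.sum_congr rfl fun u hu => ?_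
            have h1 : y u ≤ θ u := hex u hu
            rw [qloss_of_nonpos τ (by linarith : y u - θ u - ε ≤ 0),
              qloss_of_nonpos τ (by linarith : y u - θ u ≤ 0)]
            ring
        _ = ((Finset.Icc a b).card : ℝ) * ((1 - τ) * ε) := by
            rw [Finset.sum_const, nsmul_eq_mul]
        _ = ((b : ℝ) - (a : ℝ) + 1) * ((1 - τ) * ε) := by rw [hcard]
    rw [hS] at hm
    by_contra hcon
    push_neg at hcon
    have hle : obj τ lam y (fun u => θ u + if u ∈ Finset.Icc a b then ε else 0)
        ≤ obj τ lam y θ := by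
      rw [hm]
      have h4 : (1 - τ) * ((b : ℝ) - (a : ℝ) + 1) * ε ≤ 2 * lam * K * ε :=
        mul_le_mul_of_nonneg_right hcon (le_of_lt hε0)
      nlinarith
    have hsolη : (fun u => θ u + if u ∈ Finset.Icc a b then ε else 0) ∈ sol τ lam y :=
      fun η' => hle.trans (hθ η')
    have hi := hattain _ hsolη
    have hiJ : i ∈ Finset.Icc a b := Finset.mem_Icc.mpr ⟨hai, hib⟩
    simp only [if_pos hiJ] at hi
    linarith


lemma Cconst_self {n a b : ℕ} (hb : b < n) :
    QTVD.Cconst n a b a b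
      = -((if 0 < a then (1/2 : ℝ) else 0) + (if b + 1 < n then (1/2 : ℝ) else 0)) := by
  unfold QTVD.Cconst
  split_ifs <;> first | (exfalso; omega) | norm_num

lemma Cconst_nonneg {n c d a b : ℕ} (h : ¬ (c = a ∧ d = b)) :
    0 ≤ QTVD.Cconst n c d a b := by
  unfold QTVD.Cconst
  split_ifs <;> first | (exfalso; omega) | norm_num

end Aux

/-- `u^τ_{I,Ĵ} < |I|` for the maximal solution.
Let `θmax ∈ S^τ` attain the maximal feasible value at location `i` and let
`Ĵ = [a:b]` be the largest interval containing `i` on which `θmax_u ≤ θmax_i`.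
Then `u^τ_{I,Ĵ} < |I|` for every discrete interval `I = [c:d] ⊆ Ĵ` containing `i`. -/
theorem u_lt_card_for_maximal_solution
    {n : ℕ} (τ lam : ℝ) (hτ0 : 0 < τ) (hτ1 : τ < 1) (hlam : 0 ≤ lam)
    (y : Fin n → ℝ) (i : Fin n) (θmax : Fin n → ℝ)
    (hθ : θmax ∈ QTVD.sol τ lam y)
    (hattain : ∀ θ ∈ QTVD.sol τ lam y, θ i ≤ θmax i)
    (a b : Fin n) (hai : a ≤ i) (hib : i ≤ b)
    (hJle : ∀ u ∈ Finset.Icc a b, θmax u ≤ θmax i)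
    (hmaxl : ∀ _h : 0 < (a : ℕ),
      θmax i < θmax ⟨(a : ℕ) - 1, lt_of_le_of_lt (Nat.sub_le _ _) a.isLt⟩)
    (hmaxr : ∀ h : (b : ℕ) + 1 < n, θmax i < θmax ⟨(b : ℕ) + 1, h⟩) :
    ∀ c d : Fin n, a ≤ c → c ≤ i → i ≤ d → d ≤ b →
      QTVD.uIJ τ lam n c d a b < (d : ℝ) - (c : ℝ) + 1 := by
  intro c d hac hci hid hdb
  have hcd : (c : ℕ) ≤ (d : ℕ) := le_trans hci hid
  have hL1 : (1 : ℝ) ≤ (d : ℝ) - (c : ℝ) + 1 := by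
    have h0 : ((c : ℕ) : ℝ) ≤ ((d : ℕ) : ℝ) := Nat.cast_le.mpr hcd
    linarith
  by_cases hIJ : ((c : ℕ) = (a : ℕ) ∧ (d : ℕ) = (b : ℕ))
  · obtain ⟨h1, h2⟩ := hIJ
    have hkey := key_strict τ lam hτ1 hlam y i θmax hθ hattain a b hai hib hJle hmaxl hmaxr
    simp only [QTVD.uIJ]
    rw [h1, h2, Cconst_self b.isLt]
    linarith
  · have hC := Cconst_nonneg (n := n) hIJ
    have h2 : 0 ≤ 2 * lam * QTVD.Cconst n (c : ℕ) (d : ℕ) (a : ℕ) (b : ℕ) :=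
      mul_nonneg (by linarith) hC
    have h3 : (1 - τ) * 1 ≤ (1 - τ) * ((d : ℝ) - (c : ℝ) + 1) :=
      mul_le_mul_of_nonneg_left hL1 (by linarith)
    simp only [QTVD.uIJ]
    nlinarith
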